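/- For every n ≥ 2, the Černý automaton C_n is synchronizing: the word w = b(a^{n-1}b)^{n-2} of length (n-1)^2 satisfies qw = 2 for every state q in {1,...,n}. -/

import Mathlib

/-- Apply a word (list of transition functions) to a state, left to right. -/
def applyWord {α : Type*} (w : List (α → α)) (q : α) : α :=
  w.foldl (fun s f => f s) q

/-- The `a`-transition of the Černý automaton on `Fin n` (state `i+1` is index `i`). -/
def cernyA (n : ℕ) [NeZero n] : Fin n → Fin n := fun q => q + 1

/-- The `b`-transition of the Černý automaton: state 1 ↦ 2, others fixed. -/
def cernyB (n : ℕ) [NeZero n] : Fin n → Fin n := fun q => if q = 0 then 1 else q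

lemma applyWord_append {α : Type*} (u v : List (α → α)) (q : α) :
    applyWord (u ++ v) q = applyWord v (applyWord u q) := by
  simp [applyWord, List.foldl_append]

open Fin.NatCast in
lemma applyWord_replicateA (n : ℕ) [NeZero n] (m : ℕ) (q : Fin n) :
    applyWord (List.replicate m (cernyA n)) q = q + (m : Fin n) := by
  induction m generalizing q with
  | zero => simp [applyWord]
  | succ k ih =>
      rw [List.replicate_succ]
      show applyWord (List.replicate k (cernyA n)) (cernyA n q) = _
      rw [ih]
      simp [cernyA]
      rw [add_assoc, add_comm (1 : Fin n)]

open Fin.NatCast in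
lemma cerny_block (n : ℕ) [NeZero n] (hn : 2 ≤ n) (k : ℕ) (q : Fin n)
    (h1 : 1 ≤ q.val) (h2 : q.val ≤ k + 1) :
    applyWord (List.replicate k (List.replicate (n - 1) (cernyA n) ++ [cernyB n])).flatten q
      = (1 : Fin n) := by
  induction k generalizing q with
  | zero =>
      have : q.val = 1 := le_antisymm h2 h1
      have hq : q = (1 : Fin n) := by
        apply Fin.ext
        simp [this, Fin.val_one', Nat.mod_eq_of_lt hn]
      simp [applyWord, hq]
  | succ k ih =>
      rw [List.replicate_succ, List.flatten_cons, applyWord_append, applyWord_append,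
        applyWord_replicateA]
      set q' := q + ((n - 1 : ℕ) : Fin n) with hq'
      have hval : q'.val = q.val - 1 := by
        have : q'.val = (q.val + (n - 1)) % n := by
          simp [hq', Fin.add_def, Fin.val_cast_of_lt (show n - 1 < n by omega)]
        rw [this]
        have hqlt := q.isLt
        have : q.val + (n - 1) = (q.val - 1) + n := by omega
        rw [this, Nat.add_mod_right, Nat.mod_eq_of_lt (by omega)]
      show applyWord _ (applyWord [cernyB n] q') = _
      have hb : applyWord [cernyB n] q' = cernyB n q' := rfl
      rw [hb]
      by_cases h0 : q' = 0
      · have : cernyB n q' = 1 := by simp [cernyB, h0]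
        rw [this]
        apply ih
        · simp [Fin.val_one', Nat.mod_eq_of_lt hn]
        · simp [Fin.val_one', Nat.mod_eq_of_lt hn]
      · have : cernyB n q' = q' := by simp [cernyB, h0]
        rw [this]
        apply ih
        · have : q'.val ≠ 0 := fun h => h0 (Fin.ext (by simp [h]))
          omega
        · omega

/-- for n ≥ 2, the word b(a^{n-1}b)^{n-2} has length (n-1)^2 and sends
every state to state 2 (index 1), so the Černý automaton `C_n` is synchronizing. -/
theorem cerny_sync (n : ℕ) (hn : 2 ≤ n) [NeZero n] :
    let w : List (Fin n → Fin n) :=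
      cernyB n :: (List.replicate (n - 2) (List.replicate (n - 1) (cernyA n) ++ [cernyB n])).flatten
    w.length = (n - 1) ^ 2 ∧ ∀ q : Fin n, applyWord w q = (1 : Fin n) := by
  intro w
  constructor
  · obtain ⟨m, rfl⟩ : ∃ m, n = m + 2 := ⟨n - 2, by omega⟩
    simp [w, List.length_flatten, Function.comp]
    ring
  · intro q
    show applyWord _ (cernyB n q) = _
    apply cerny_block n hn
    · by_cases h0 : q = 0
      · simp [cernyB, h0, Fin.val_one', Nat.mod_eq_of_lt hn]
      · simp [cernyB, h0]
        have : q.val ≠ 0 := fun h => h0 (Fin.ext (by simp [h]))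
        omega
    · have h := (cernyB n q).isLt
      omega
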